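/- Let q be an odd prime power and let F = {E₀, …, E_q} be a partition of the point set of PG(3,q) into q+1 pairwise disjoint elliptic quadrics such that no plane of PG(3,q) is tangent to two distinct members of F. For 0 ≤ i ≤ q let S_i be the set of lines of the Klein quadric Q⁺(5,q) corresponding, under the Klein correspondence, to the pencils of tangent lines of E_i at its points (so each S_i is a 1-system of Q⁺(5,q)). Then no plane (generator) of Q⁺(5,q) contains two lines of ∪_{i=0}^{q} S_i. -/

import Mathlib

open Module

section PolarDefs

variable {F V : Type*} [Field F] [AddCommGroup V] [Module F V]

/-- A submodule is totally singular for a quadratic form: the form vanishes on it.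
(Projective dimension of a `k`-dimensional submodule is `k - 1`.) -/
def TotSingQ (Q : QuadraticForm F V) (W : Submodule F V) : Prop :=
  ∀ v ∈ W, Q v = 0

/-- Non-degeneracy of a quadratic form: the radical of the quadric is trivial. -/
def QuadNondeg (Q : QuadraticForm F V) : Prop :=
  ∀ v : V, Q v = 0 → (∀ w : V, QuadraticMap.polar (⇑Q) v w = 0) → v = 0

/-- A submodule is totally isotropic for a bilinear form. -/
def TotIsoB (B : LinearMap.BilinForm F V) (W : Submodule F V) : Prop :=
  ∀ v ∈ W, ∀ w ∈ W, B v w = 0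

/-- The maximal (vector-space) dimension of a subspace satisfying `iso` is `r`:
this is the rank (Witt index) of the polar space whose totally
isotropic/singular subspaces are described by `iso`. -/
def MaxIsoDim (iso : Submodule F V → Prop) (r : ℕ) : Prop :=
  (∃ W, iso W ∧ finrank F ↥W = r) ∧ ∀ W, iso W → finrank F ↥W ≤ r

/-- `R` is an `m`-regular system with respect to `(k - 1)`-dimensional projective subspaces
(i.e. `k`-dimensional vector subspaces) of the polar space of rank `d` whose totally
isotropic/singular subspaces are described by `iso`: `R` is a set of generators
(totally isotropic `d`-dimensional subspaces) such that every totally isotropic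
`k`-dimensional subspace lies on exactly `m` members of `R`. -/
def IsRegSys (iso : Submodule F V → Prop) (d k : ℕ) (R : Set (Submodule F V)) (m : ℕ) : Prop :=
  (∀ G ∈ R, iso G ∧ finrank F ↥G = d) ∧
    ∀ W : Submodule F V, iso W → finrank F ↥W = k → {G ∈ R | W ≤ G}.ncard = m

/-- The polar space described by `iso`, of rank `d`, has an `m`-regular system with
respect to `(k-1)`-dimensional projective subspaces. -/
def HasRegSys (iso : Submodule F V → Prop) (d k m : ℕ) : Prop :=
  ∃ R, IsRegSys iso d k R m

/-- A hemisystem with respect to `(k-1)`-spaces: a regular system containing exactly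
half of all the generators. -/
def IsHemisys (iso : Submodule F V → Prop) (d k : ℕ) (R : Set (Submodule F V)) : Prop :=
  (∃ m, IsRegSys iso d k R m) ∧
    2 * R.ncard = {G : Submodule F V | iso G ∧ finrank F ↥G = d}.ncard

end PolarDefs

/-- A (possibly Hermitian) sesquilinear form with respect to the field
automorphism `σ`: additive in both arguments, linear in the first one,
`σ`-semilinear in the second one, and conjugate-symmetric. -/
structure SesquiForm (E : Type*) [Field E] (σ : E → E) (V : Type*) [AddCommGroup V]
    [Module E V] where
  toFun : V → V → E
  add_left : ∀ x y z, toFun (x + y) z = toFun x z + toFun y z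
  smul_left : ∀ (c : E) (x y : V), toFun (c • x) y = c * toFun x y
  add_right : ∀ x y z, toFun x (y + z) = toFun x y + toFun x z
  smul_right : ∀ (c : E) (x y : V), toFun x (c • y) = σ c * toFun x y
  conj_symm : ∀ x y, toFun y x = σ (toFun x y)

section HermDefs

variable {E V : Type*} [Field E] {σ : E → E} [AddCommGroup V] [Module E V]

/-- Non-degeneracy of a sesquilinear form. -/
def SesquiForm.Nondeg (B : SesquiForm E σ V) : Prop :=
  ∀ v : V, (∀ w : V, B.toFun v w = 0) → v = 0

/-- A submodule is totally isotropic for a sesquilinear form. -/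
def TotIsoH (B : SesquiForm E σ V) (W : Submodule E V) : Prop :=
  ∀ v ∈ W, ∀ w ∈ W, B.toFun v w = 0

end HermDefs

section Helpers

variable {K : Type*} [Field K] {n : ℕ}

open Submodule QuadraticMap

lemma totsing_span (Q : QuadraticForm K (Fin n → K)) (v : Fin n → K) (hv : Q v = 0) :
    TotSingQ Q (span K {v}) := by
  intro z hz
  obtain ⟨t, rfl⟩ := mem_span_singleton.mp hz
  rw [QuadraticMap.map_smul, hv, smul_eq_mul, mul_zero]

lemma rank_one_span (p : Submodule K (Fin n → K)) (hp : finrank K ↥p = 1) :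
    ∃ v : Fin n → K, v ≠ 0 ∧ v ∈ p ∧ p = span K {v} := by
  have hbot : p ≠ ⊥ := by intro h; rw [h, finrank_bot] at hp; omega
  obtain ⟨v, hvp, hv0⟩ := Submodule.exists_mem_ne_zero_of_ne_bot hbot
  have hsp : span K {v} ≤ p := (span_singleton_le_iff_mem v p).mpr hvp
  exact ⟨v, hv0, hvp, (Submodule.eq_of_le_of_finrank_le hsp
    (by rw [hp, finrank_span_singleton hv0])).symm⟩

lemma two_points (lq : Submodule K (Fin n → K)) (h2 : finrank K ↥lq = 2) :
    ∃ u u' : Fin n → K, u ∈ lq ∧ u' ∈ lq ∧ u ≠ 0 ∧ u' ≠ 0 ∧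
      (span K {u} : Submodule K (Fin n → K)) ≠ span K {u'} := by
  have hbot : lq ≠ ⊥ := by intro h; rw [h, finrank_bot] at h2; omega
  obtain ⟨u, hu, hu0⟩ := Submodule.exists_mem_ne_zero_of_ne_bot hbot
  have hsp : span K {u} ≤ lq := (span_singleton_le_iff_mem u lq).mpr hu
  have hne : span K {u} ≠ lq := by
    intro h; rw [← h, finrank_span_singleton hu0] at h2; omega
  obtain ⟨u', hu'lq, hu'⟩ := SetLike.exists_of_lt (lt_of_le_of_ne hsp hne)
  refine ⟨u, u', hu, hu'lq, hu0, ?_, ?_⟩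
  · rintro rfl; exact hu' (zero_mem _)
  · intro h; exact hu' (h ▸ mem_span_singleton_self u')

lemma span_le_polar_ker (Q : QuadraticForm K (Fin n → K)) (v : Fin n → K) (hQv : Q v = 0) :
    span K {v} ≤ LinearMap.ker ((QuadraticMap.polarBilin Q) v) := by
  intro z hz
  obtain ⟨t, rfl⟩ := mem_span_singleton.mp hz
  rw [LinearMap.mem_ker, polarBilin_apply_apply, polar_smul_right, polar_self, hQv,
    smul_eq_mul]
  simp

lemma tangent_line_le_polar (Q : QuadraticForm K (Fin n → K))
    (EE : Set (Submodule K (Fin n → K)))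
    (hEE : EE = {p : Submodule K (Fin n → K) | finrank K ↥p = 1 ∧ TotSingQ Q p})
    (v : Fin n → K) (hv : v ≠ 0) (hQv : Q v = 0)
    (l : Submodule K (Fin n → K))
    (htan : {p | p ∈ EE ∧ p ≤ l} = {span K {v}})
    (w : Fin n → K) (hw : w ∈ l) : QuadraticMap.polar (⇑Q) v w = 0 := by
  by_contra hc
  set c := QuadraticMap.polar (⇑Q) v w with hcdef
  set u := w + (-(Q w / c)) • v with hudef
  have hvl : v ∈ l := by
    have hmem : span K {v} ∈ {p | p ∈ EE ∧ p ≤ l} := by rw [htan]; rfl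
    exact hmem.2 (mem_span_singleton_self v)
  have hul : u ∈ l := add_mem hw (smul_mem _ _ hvl)
  have hQu : Q u = 0 := by
    have hp : QuadraticMap.polar (⇑Q) w ((-(Q w / c)) • v) = Q u - Q w - Q ((-(Q w / c)) • v) := by
      rw [hudef]; rfl
    have h1 : QuadraticMap.polar (⇑Q) w ((-(Q w / c)) • v) = (-(Q w / c)) * c := by
      rw [polar_smul_right, smul_eq_mul, polar_comm, ← hcdef]
    have h2 : Q ((-(Q w / c)) • v) = 0 := by
      rw [QuadraticMap.map_smul, hQv, smul_eq_mul, mul_zero]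
    rw [h1, h2, sub_zero] at hp
    field_simp at hp
    have hz : Q u * c = 0 := by linear_combination (-c) * hp
    exact (mul_eq_zero.mp hz).resolve_right hc
  have hpu : QuadraticMap.polar (⇑Q) v u = c := by
    rw [hudef, polar_add_right, polar_smul_right, polar_self, hQv, ← hcdef]
    simp
  have hu0 : u ≠ 0 := by
    intro h; rw [h, polar_zero_right] at hpu; exact hc hpu.symm
  have hmem : span K {u} ∈ {p | p ∈ EE ∧ p ≤ l} := by
    constructor
    · rw [hEE]
      exact ⟨finrank_span_singleton hu0, totsing_span Q u hQu⟩
    · exact (span_singleton_le_iff_mem u l).mpr hul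
  rw [htan, Set.mem_singleton_iff] at hmem
  have huv : u ∈ span K {v} := hmem ▸ mem_span_singleton_self u
  obtain ⟨t, ht⟩ := mem_span_singleton.mp huv
  rw [← ht, polar_smul_right, polar_self, hQv] at hpu
  simp at hpu
  exact hc hpu.symm

lemma polar_tangent_set (Q : QuadraticForm K (Fin n → K))
    (hmax : ∀ W, TotSingQ Q W → finrank K ↥W ≤ 1)
    (v : Fin n → K) (hv : v ≠ 0) (hQv : Q v = 0)
    (p : Submodule K (Fin n → K)) (hp1 : finrank K ↥p = 1) (hps : TotSingQ Q p)
    (hple : p ≤ LinearMap.ker ((QuadraticMap.polarBilin Q) v)) : p = span K {v} := by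
  obtain ⟨w, hw0, hwp, hpw⟩ := rank_one_span p hp1
  by_contra hne
  have hwv : w ∉ span K {v} := by
    intro hmem
    exact hne (Submodule.eq_of_le_of_finrank_le
      (hpw ▸ (span_singleton_le_iff_mem w _).mpr hmem)
      (by rw [hp1, finrank_span_singleton hv]))
  have hpol : QuadraticMap.polar (⇑Q) v w = 0 := by
    have := hple hwp
    rwa [LinearMap.mem_ker, polarBilin_apply_apply] at this
  have hQw : Q w = 0 := hps w hwp
  set W := span K ({v, w} : Set (Fin n → K)) with hW
  have hsing : TotSingQ Q W := by
    intro z hz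
    obtain ⟨a, b, hab⟩ := mem_span_pair.mp hz
    have hpz : QuadraticMap.polar (⇑Q) (a • v) (b • w) = Q z - Q (a • v) - Q (b • w) := by
      rw [← hab]; rfl
    rw [polar_smul_left, polar_smul_right, hpol, QuadraticMap.map_smul,
      QuadraticMap.map_smul, hQv, hQw] at hpz
    simp at hpz
    exact hpz.symm
  have hlt : span K {v} < W := by
    refine lt_of_le_of_ne (span_mono (by simp)) ?_
    intro h
    exact hwv (h ▸ subset_span (by simp : w ∈ ({v, w} : Set (Fin n → K))))
  have h2 : 2 ≤ finrank K ↥W := by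
    have := Submodule.finrank_lt_finrank_of_lt hlt
    rw [finrank_span_singleton hv] at this
    omega
  have := hmax W hsing
  omega

lemma polar_ker_finrank (Q : QuadraticForm K (Fin 4 → K)) (hnd : QuadNondeg Q)
    (v : Fin 4 → K) (hv : v ≠ 0) (hQv : Q v = 0) :
    finrank K ↥(LinearMap.ker ((QuadraticMap.polarBilin Q) v)) = 3 := by
  set f := (QuadraticMap.polarBilin Q) v with hf
  have hex : ∃ w, f w ≠ 0 := by
    by_contra h
    push_neg at h
    exact hv (hnd v hQv (fun w => by have := h w; rwa [hf, polarBilin_apply_apply] at this))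
  have hr : finrank K ↥(LinearMap.range f) = 1 := by
    have hle : finrank K ↥(LinearMap.range f) ≤ 1 := by
      have h := Submodule.finrank_le (LinearMap.range f)
      simpa using h
    have hpos : 0 < finrank K ↥(LinearMap.range f) := by
      rw [Module.finrank_pos_iff_exists_ne_zero]
      obtain ⟨w, hw⟩ := hex
      exact ⟨⟨f w, LinearMap.mem_range_self f w⟩, by simpa using hw⟩
    omega
  have := LinearMap.finrank_range_add_finrank_ker f
  rw [hr, Module.finrank_fin_fun] at this
  omega

end Helpers


/-- Let `q` be an odd prime power and let `F = {E₀, …, E_q}` be a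
partition of the point set of `PG(3,q)` into `q+1` pairwise disjoint elliptic quadrics such
that no plane of `PG(3,q)` is tangent to two distinct members of the partition. The Klein
correspondence `κ` is a bijection from the lines of `PG(3,q)` onto the points of the Klein
quadric `Q⁺(5,q)` mapping pencils of lines (lines through a fixed point) onto the point
sets of the Latin planes and ruled planes (lines inside a fixed plane) onto the point sets
of the Greek planes, and every generator of `Q⁺(5,q)` arises in this way. For `0 ≤ i ≤ q`
let `S i` be the set of lines of `Q⁺(5,q)` corresponding, under `κ`, to the pencils of
tangent lines of `E i` at its points. Then no plane (generator) of `Q⁺(5,q)` contains two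
distinct lines of `⋃ i, S i`. -/
theorem klein_one_systems_no_common_plane (F : Type) [Field F] [Fintype F]
    (q : ℕ) (hq : q = Fintype.card F) (hodd : Odd q)
    (Qk : QuadraticForm F (Fin 6 → F)) (hQk : QuadNondeg Qk)
    (hWk : MaxIsoDim (TotSingQ Qk) 3)
    (κ : Submodule F (Fin 4 → F) → Submodule F (Fin 6 → F))
    (hκpt : ∀ l : Submodule F (Fin 4 → F), finrank F ↥l = 2 →
      finrank F ↥(κ l) = 1 ∧ TotSingQ Qk (κ l))
    (hκinj : ∀ l l' : Submodule F (Fin 4 → F), finrank F ↥l = 2 → finrank F ↥l' = 2 →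
      κ l = κ l' → l = l')
    (hκsurj : ∀ p : Submodule F (Fin 6 → F), finrank F ↥p = 1 → TotSingQ Qk p →
      ∃ l : Submodule F (Fin 4 → F), finrank F ↥l = 2 ∧ κ l = p)
    (hκlatin : ∀ P : Submodule F (Fin 4 → F), finrank F ↥P = 1 →
      ∃ G : Submodule F (Fin 6 → F), TotSingQ Qk G ∧ finrank F ↥G = 3 ∧
        ∀ l : Submodule F (Fin 4 → F), finrank F ↥l = 2 → (P ≤ l ↔ κ l ≤ G))
    (hκgreek : ∀ π : Submodule F (Fin 4 → F), finrank F ↥π = 3 →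
      ∃ G : Submodule F (Fin 6 → F), TotSingQ Qk G ∧ finrank F ↥G = 3 ∧
        ∀ l : Submodule F (Fin 4 → F), finrank F ↥l = 2 → (l ≤ π ↔ κ l ≤ G))
    (hκall : ∀ G : Submodule F (Fin 6 → F), TotSingQ Qk G → finrank F ↥G = 3 →
      (∃ P : Submodule F (Fin 4 → F), finrank F ↥P = 1 ∧
        ∀ l : Submodule F (Fin 4 → F), finrank F ↥l = 2 → (P ≤ l ↔ κ l ≤ G)) ∨
      (∃ π : Submodule F (Fin 4 → F), finrank F ↥π = 3 ∧
        ∀ l : Submodule F (Fin 4 → F), finrank F ↥l = 2 → (l ≤ π ↔ κ l ≤ G)))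
    (E : Fin (q + 1) → Set (Submodule F (Fin 4 → F)))
    (hell : ∀ i, ∃ Qe : QuadraticForm F (Fin 4 → F), QuadNondeg Qe ∧
      MaxIsoDim (TotSingQ Qe) 1 ∧ E i = {p : Submodule F (Fin 4 → F) | finrank F ↥p = 1 ∧ TotSingQ Qe p})
    (hpart : ∀ p : Submodule F (Fin 4 → F), finrank F ↥p = 1 → ∃! i, p ∈ E i)
    (htang : ∀ π : Submodule F (Fin 4 → F), finrank F ↥π = 3 → ∀ i j, i ≠ j →
      ¬ ({p | p ∈ E i ∧ p ≤ π}.ncard = 1 ∧ {p | p ∈ E j ∧ p ≤ π}.ncard = 1))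
    (S : Fin (q + 1) → Set (Submodule F (Fin 6 → F)))
    (hS : ∀ i, S i = {lq : Submodule F (Fin 6 → F) |
      finrank F ↥lq = 2 ∧ TotSingQ Qk lq ∧
      ∃ x ∈ E i, ∀ l : Submodule F (Fin 4 → F), finrank F ↥l = 2 →
        ((x ≤ l ∧ {p | p ∈ E i ∧ p ≤ l} = {x}) ↔ κ l ≤ lq)}) :
    ∀ G : Submodule F (Fin 6 → F), TotSingQ Qk G → finrank F ↥G = 3 →
      ∀ l₁ ∈ ⋃ i, S i, ∀ l₂ ∈ ⋃ i, S i, l₁ ≤ G → l₂ ≤ G → l₁ = l₂ := by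
  intro G hGs hG3 l₁ hl₁ l₂ hl₂ h1G h2G
  rw [Set.mem_iUnion] at hl₁ hl₂
  obtain ⟨i, hi⟩ := hl₁
  obtain ⟨j, hj⟩ := hl₂
  rw [hS i] at hi
  rw [hS j] at hj
  obtain ⟨h1r, h1s, x₁, hx₁E, hx₁⟩ := hi
  obtain ⟨h2r, h2s, x₂, hx₂E, hx₂⟩ := hj
  have getline : ∀ (lq : Submodule F (Fin 6 → F)), finrank F ↥lq = 2 → TotSingQ Qk lq →
      ∀ u : Fin 6 → F, u ≠ 0 → u ∈ lq →
      ∃ l : Submodule F (Fin 4 → F), finrank F ↥l = 2 ∧ κ l = Submodule.span F {u} ∧ κ l ≤ lq := by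
    intro lq h2 hs u hu0 hu
    have hsp : Submodule.span F {u} ≤ lq := (Submodule.span_singleton_le_iff_mem u lq).mpr hu
    obtain ⟨l, hl2, hκl⟩ := hκsurj (Submodule.span F {u}) (finrank_span_singleton hu0)
      (fun z hz => hs z (hsp hz))
    exact ⟨l, hl2, hκl, hκl ▸ hsp⟩
  have le_of_iff : ∀ (ii : Fin (q + 1)) (x : Submodule F (Fin 4 → F))
      (la lb : Submodule F (Fin 6 → F)),
      finrank F ↥la = 2 → TotSingQ Qk la →
      (∀ l : Submodule F (Fin 4 → F), finrank F ↥l = 2 →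
        ((x ≤ l ∧ {p | p ∈ E ii ∧ p ≤ l} = {x}) ↔ κ l ≤ la)) →
      (∀ l : Submodule F (Fin 4 → F), finrank F ↥l = 2 →
        ((x ≤ l ∧ {p | p ∈ E ii ∧ p ≤ l} = {x}) ↔ κ l ≤ lb)) →
      la ≤ lb := by
    intro ii x la lb h2 hsing hiffa hiffb v hv
    rcases eq_or_ne v 0 with rfl | hv0
    · exact lb.zero_mem
    obtain ⟨l, hl2, hκl, hκle⟩ := getline la h2 hsing v hv0 hv
    have hC := (hiffa l hl2).mpr hκle
    have hres := (hiffb l hl2).mp hC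
    rw [hκl] at hres
    exact hres (Submodule.mem_span_singleton_self v)
  rcases hκall G hGs hG3 with ⟨P, hP1, hP⟩ | ⟨π, hπ3, hπ⟩
  · -- Latin case
    have keyL : ∀ (ii : Fin (q + 1)) (lq : Submodule F (Fin 6 → F))
        (x : Submodule F (Fin 4 → F)), x ∈ E ii →
        finrank F ↥lq = 2 → TotSingQ Qk lq → lq ≤ G →
        (∀ l : Submodule F (Fin 4 → F), finrank F ↥l = 2 →
          ((x ≤ l ∧ {p | p ∈ E ii ∧ p ≤ l} = {x}) ↔ κ l ≤ lq)) →
        x = P := by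
      intro ii lq x hxE h2 hsing hle hiff
      obtain ⟨Qe, _, _, hEeq⟩ := hell ii
      have hx1 : finrank F ↥x = 1 := by rw [hEeq] at hxE; exact hxE.1
      obtain ⟨u, u', hu, hu', hu0, hu'0, hspne⟩ := two_points lq h2
      obtain ⟨l, hl2, hκl, hκle⟩ := getline lq h2 hsing u hu0 hu
      obtain ⟨l', hl'2, hκl', hκle'⟩ := getline lq h2 hsing u' hu'0 hu'
      have hll' : l ≠ l' := fun h => hspne (by rw [← hκl, ← hκl', h])
      have hxl : x ≤ l := ((hiff l hl2).mpr hκle).1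
      have hxl' : x ≤ l' := ((hiff l' hl'2).mpr hκle').1
      have hPl : P ≤ l := (hP l hl2).mpr (hκle.trans hle)
      have hPl' : P ≤ l' := (hP l' hl'2).mpr (hκle'.trans hle)
      by_contra hxP
      have h2le : 2 ≤ finrank F ↥(x ⊔ P) := by
        have hlt : x < x ⊔ P := by
          refine lt_of_le_of_ne le_sup_left (fun h => hxP ?_)
          have hPx : P ≤ x := h ▸ le_sup_right
          exact (Submodule.eq_of_le_of_finrank_le hPx (by rw [hx1, hP1])).symm
        have := Submodule.finrank_lt_finrank_of_lt hlt
        omega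
      have hel : l = x ⊔ P :=
        (Submodule.eq_of_le_of_finrank_le (sup_le hxl hPl) (by omega)).symm
      have hel' : l' = x ⊔ P :=
        (Submodule.eq_of_le_of_finrank_le (sup_le hxl' hPl') (by omega)).symm
      exact hll' (hel.trans hel'.symm)
    have hx₁P := keyL i l₁ x₁ hx₁E h1r h1s h1G hx₁
    have hx₂P := keyL j l₂ x₂ hx₂E h2r h2s h2G hx₂
    have hij : i = j := by
      obtain ⟨k, _, hk⟩ := hpart P hP1
      exact (hk i (hx₁P ▸ hx₁E)).trans (hk j (hx₂P ▸ hx₂E)).symm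
    subst hij
    have hx12 : x₁ = x₂ := hx₁P.trans hx₂P.symm
    subst hx12
    exact le_antisymm (le_of_iff i x₁ l₁ l₂ h1r h1s hx₁ hx₂)
      (le_of_iff i x₁ l₂ l₁ h2r h2s hx₂ hx₁)
  · -- Greek case
    have keyG : ∀ (ii : Fin (q + 1)) (lq : Submodule F (Fin 6 → F))
        (x : Submodule F (Fin 4 → F)), x ∈ E ii →
        finrank F ↥lq = 2 → TotSingQ Qk lq → lq ≤ G →
        (∀ l : Submodule F (Fin 4 → F), finrank F ↥l = 2 →
          ((x ≤ l ∧ {p | p ∈ E ii ∧ p ≤ l} = {x}) ↔ κ l ≤ lq)) →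
        {p | p ∈ E ii ∧ p ≤ π} = {x} := by
      intro ii lq x hxE h2 hsing hle hiff
      obtain ⟨Qe, hnd, hmax, hEeq⟩ := hell ii
      have hx1 : finrank F ↥x = 1 := by rw [hEeq] at hxE; exact hxE.1
      have hxsing : TotSingQ Qe x := by rw [hEeq] at hxE; exact hxE.2
      obtain ⟨v, hv0, hvx, hxv⟩ := rank_one_span x hx1
      have hQv : Qe v = 0 := hxsing v hvx
      obtain ⟨u, u', hu, hu', hu0, hu'0, hspne⟩ := two_points lq h2
      obtain ⟨l, hl2, hκl, hκle⟩ := getline lq h2 hsing u hu0 hu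
      obtain ⟨l', hl'2, hκl', hκle'⟩ := getline lq h2 hsing u' hu'0 hu'
      have hll' : l ≠ l' := fun h => hspne (by rw [← hκl, ← hκl', h])
      have hta := (hiff l hl2).mpr hκle
      have htb := (hiff l' hl'2).mpr hκle'
      have hlπ : l ≤ π := (hπ l hl2).mpr (hκle.trans hle)
      have hl'π : l' ≤ π := (hπ l' hl'2).mpr (hκle'.trans hle)
      set T := LinearMap.ker ((QuadraticMap.polarBilin Qe) v) with hT
      have hlT : l ≤ T := by
        intro w hw
        rw [hT, LinearMap.mem_ker, QuadraticMap.polarBilin_apply_apply]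
        exact tangent_line_le_polar Qe (E ii) hEeq v hv0 hQv l (hxv ▸ hta.2) w hw
      have hl'T : l' ≤ T := by
        intro w hw
        rw [hT, LinearMap.mem_ker, QuadraticMap.polarBilin_apply_apply]
        exact tangent_line_le_polar Qe (E ii) hEeq v hv0 hQv l' (hxv ▸ htb.2) w hw
      have hsupπ : l ⊔ l' = π := by
        refine Submodule.eq_of_le_of_finrank_le (sup_le hlπ hl'π) ?_
        have hlt : l < l ⊔ l' := by
          refine lt_of_le_of_ne le_sup_left (fun h => hll' ?_)
          exact (Submodule.eq_of_le_of_finrank_le (h ▸ le_sup_right : l' ≤ l)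
            (by rw [hl2, hl'2])).symm
        have := Submodule.finrank_lt_finrank_of_lt hlt
        omega
      have hπT : π = T := by
        refine Submodule.eq_of_le_of_finrank_le ?_ ?_
        · rw [← hsupπ]; exact sup_le hlT hl'T
        · rw [hπ3, polar_ker_finrank Qe hnd v hv0 hQv]
      ext p
      simp only [Set.mem_setOf_eq, Set.mem_singleton_iff]
      constructor
      · rintro ⟨hpE, hpπ⟩
        rw [hEeq] at hpE
        rw [hxv]
        have hpT : p ≤ T := hπT ▸ hpπ
        exact polar_tangent_set Qe hmax.2 v hv0 hQv p hpE.1 hpE.2 hpT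
      · rintro rfl
        refine ⟨hxE, ?_⟩
        rw [hπT, hxv]
        exact span_le_polar_ker Qe v hQv
    have h1set := keyG i l₁ x₁ hx₁E h1r h1s h1G hx₁
    have h2set := keyG j l₂ x₂ hx₂E h2r h2s h2G hx₂
    have hij : i = j := by
      by_contra hne
      exact htang π hπ3 i j hne
        ⟨by rw [h1set]; exact Set.ncard_singleton x₁,
         by rw [h2set]; exact Set.ncard_singleton x₂⟩
    subst hij
    have hx12 : x₁ = x₂ := by
      have hss := h1set.symm.trans h2set
      simpa using hss
    subst hx12
    exact le_antisymm (le_of_iff i x₁ l₁ l₂ h1r h1s hx₁ hx₂)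
      (le_of_iff i x₁ l₂ l₁ h2r h2s hx₂ hx₁)
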